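/- If H is a hypergraph in which every pair of hyperedges has an empty intersection or intersects in at least two vertices, then H admits a proper 2-coloring, i.e., a 2-coloring of the vertices such that no hyperedge is monochromatic. -/
import Mathlib


/-- If every pair of hyperedges of a hypergraph has empty intersection or intersects
in at least two vertices (and every hyperedge has size at least 2), then the
hypergraph admits a proper 2-coloring. -/
theorem stmt0 {V : Type*} [Fintype V] [DecidableEq V]
    (E : Finset (Finset V))
    (hsize : ∀ e ∈ E, 2 ≤ e.card)
    (hint : ∀ e₁ ∈ E, ∀ e₂ ∈ E, e₁ ∩ e₂ = ∅ ∨ 2 ≤ (e₁ ∩ e₂).card) :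
    ∃ f : V → Bool, ∀ e ∈ E, ∃ u ∈ e, ∃ w ∈ e, f u ≠ f w := by
  classical
  letI : LinearOrder V := LinearOrder.lift' (Fintype.equivFin V) (Equiv.injective _)
  refine ⟨fun v => decide (∃ e ∈ E, ∃ he : e.Nonempty, e.min' he = v), ?_⟩
  intro e he
  have hne : e.Nonempty := Finset.card_pos.mp (by have := hsize e he; omega)
  refine ⟨e.min' hne, e.min'_mem hne, e.max' hne, e.max'_mem hne, ?_⟩
  have h1 : decide (∃ e' ∈ E, ∃ he' : e'.Nonempty, e'.min' he' = e.min' hne) = true := by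
    simp only [decide_eq_true_eq]
    exact ⟨e, he, hne, rfl⟩
  have h2 : decide (∃ e' ∈ E, ∃ he' : e'.Nonempty, e'.min' he' = e.max' hne) = false := by
    simp only [decide_eq_false_iff_not]
    rintro ⟨e', he', hne', hmin⟩
    have hmem : e.max' hne ∈ e ∩ e' := by
      rw [Finset.mem_inter]
      exact ⟨e.max'_mem hne, hmin ▸ e'.min'_mem hne'⟩
    have hcard : 2 ≤ (e ∩ e').card := by
      rcases hint e he e' he' with h | h
      · simp [h] at hmem
      · exact h
    obtain ⟨x, hx, hxne⟩ := Finset.exists_mem_ne hcard (e.max' hne)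
    rw [Finset.mem_inter] at hx
    have hle : x ≤ e.max' hne := e.le_max' x hx.1
    have hge : e.max' hne ≤ x := hmin ▸ e'.min'_le x hx.2
    exact hxne (le_antisymm hle hge)
  simp only [h1, h2]
  exact Bool.noConfusion
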